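/- arXiv:1711.03307 — 4 statements merged into one kernel-verified Lean document; each statement's English description precedes it below -/
import Mathlib

section
/- If C is a self-dual Z2Z2[u]-linear code in Z2^α × R^β (i.e., C = C^⊥), then its Gray image Φ(C) is a self-dual binary linear code of length α + 2β. -/
open TrivSqZeroExt

/-- The ring `R = Z₂ + uZ₂` with `u² = 0`. -/
abbrev R2 : Type := DualNumber (ZMod 2)

/-- The ambient space `Z₂^α × R^β`. -/
abbrev Amb (α β : ℕ) : Type := (Fin α → ZMod 2) × (Fin β → R2)

/-- Scalar multiplication of `R` on `Z₂^α × R^β`, where `R` acts on `Z₂`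
through the quotient map killing `u`. -/
def rsmul {α β : ℕ} (r : R2) (v : Amb α β) : Amb α β :=
  (fun i => r.fst * v.1 i, fun j => r * v.2 j)

/-- A `Z₂Z₂[u]`-linear code: a subset of `Z₂^α × R^β` closed under addition
and the `R`-action. -/
def IsLinearCode {α β : ℕ} (C : Set (Amb α β)) : Prop :=
  (0 : Amb α β) ∈ C ∧ (∀ v ∈ C, ∀ w ∈ C, v + w ∈ C) ∧ ∀ (r : R2), ∀ v ∈ C, rsmul r v ∈ C

/-- The inner product `⟨V,W⟩ = u·Σ aᵢdᵢ + Σ bⱼeⱼ ∈ R`. -/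
def innerP {α β : ℕ} (V W : Amb α β) : R2 :=
  DualNumber.eps * (inl (∑ i, V.1 i * W.1 i) : R2) + ∑ j, V.2 j * W.2 j

/-- The dual code. -/
def dualCode {α β : ℕ} (C : Set (Amb α β)) : Set (Amb α β) :=
  {W | ∀ V ∈ C, innerP V W = 0}

/-- The Gray map `Φ(x, r + uq) = (x, q, r + q)` into `Z₂^(α+2β)`. -/
def gray {α β : ℕ} (v : Amb α β) :
    (Fin α → ZMod 2) × (Fin β → ZMod 2) × (Fin β → ZMod 2) :=
  (v.1, fun j => (v.2 j).snd, fun j => (v.2 j).fst + (v.2 j).snd)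

/-- The standard binary inner product on `Z₂^(α+2β)`. -/
def binDot {α β : ℕ} (v w : (Fin α → ZMod 2) × (Fin β → ZMod 2) × (Fin β → ZMod 2)) :
    ZMod 2 :=
  ∑ i, v.1 i * w.1 i + ∑ j, v.2.1 j * w.2.1 j + ∑ j, v.2.2 j * w.2.2 j

/-- The dual of a binary code with respect to the standard inner product. -/
def binDual {α β : ℕ} (D : Set ((Fin α → ZMod 2) × (Fin β → ZMod 2) × (Fin β → ZMod 2))) :
    Set ((Fin α → ZMod 2) × (Fin β → ZMod 2) × (Fin β → ZMod 2)) :=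
  {w | ∀ v ∈ D, binDot v w = 0}

lemma key {α β : ℕ} (V W : Amb α β) :
    binDot (gray V) (gray W) = (innerP V W).fst + (innerP V W).snd := by
  have h : ∀ r q e f : ZMod 2,
      q * f + (r + q) * (e + f) = r * e + (r * f + q * e) := by decide
  simp only [binDot, gray, innerP, fst_add, snd_add, fst_mul, snd_mul, fst_sum, snd_sum,
    fst_inl, snd_inl, DualNumber.fst_eps, DualNumber.snd_eps, smul_eq_mul, op_smul_eq_mul,
    zero_mul, mul_zero, mul_one, zero_add, add_zero, smul_zero, one_mul]
  have hs : (∑ j : Fin β, (V.2 j).snd * (W.2 j).snd)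
      + ∑ j : Fin β, ((V.2 j).fst + (V.2 j).snd) * ((W.2 j).fst + (W.2 j).snd)
      = (∑ j : Fin β, (V.2 j).fst * (W.2 j).fst)
      + ∑ j : Fin β, ((V.2 j).fst * (W.2 j).snd + (V.2 j).snd * (W.2 j).fst) := by
    rw [← Finset.sum_add_distrib, ← Finset.sum_add_distrib]
    exact Finset.sum_congr rfl fun j _ => h _ _ _ _
  linear_combination hs

lemma inner_eps {α β : ℕ} (V W : Amb α β) :
    innerP (rsmul DualNumber.eps V) W =
      TrivSqZeroExt.inr ((innerP V W).fst) := by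
  ext
  · simp [innerP, rsmul, fst_mul, fst_sum]
  · simp [innerP, rsmul, snd_mul, snd_sum, fst_mul, fst_sum, smul_eq_mul, op_smul_eq_mul,
      mul_comm]

/-- The Gray image of a self-dual `Z₂Z₂[u]`-linear code is a self-dual
binary code of length `α + 2β`. -/
theorem gray_image_self_dual (α β : ℕ) (C : Set (Amb α β)) (hC : IsLinearCode C)
    (hsd : C = dualCode C) : gray '' C = binDual (gray '' C) := by
  ext w
  constructor
  · rintro ⟨W, hW, rfl⟩
    rintro v ⟨V, hV, rfl⟩
    have hWd : W ∈ dualCode C := hsd ▸ hW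
    rw [key, hWd V hV]
    simp
  · intro hw
    set W : Amb α β := (w.1, fun j => TrivSqZeroExt.inl (w.2.2 j + w.2.1 j)
      + TrivSqZeroExt.inr (w.2.1 j)) with hWdef
    have hgW : gray W = w := by
      simp only [gray, hWdef, fst_add, snd_add, fst_inl, snd_inl, fst_inr, snd_inr,
        add_zero, zero_add]
      refine Prod.ext rfl (Prod.ext rfl ?_)
      funext j
      have : w.2.1 j + w.2.1 j = 0 := CharTwo.add_self_eq_zero _
      simp [add_assoc, this]
    refine ⟨W, ?_, hgW⟩
    rw [hsd]
    intro V hV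
    rw [← hgW] at hw
    have h1 : (innerP V W).fst + (innerP V W).snd = 0 := by
      rw [← key]; exact hw (gray V) ⟨V, hV, rfl⟩
    have h2 : (innerP V W).fst = 0 := by
      have h2' := hw (gray (rsmul DualNumber.eps V))
        ⟨rsmul DualNumber.eps V, hC.2.2 _ V hV, rfl⟩
      rw [key, inner_eps] at h2'
      simpa using h2'
    ext
    · exact h2
    · rw [h2, zero_add] at h1; exact h1
end

section
/- If C is a self-orthogonal Z2Z2[u]-linear code in Z2^α × R^β (i.e., C ⊆ C^⊥), then its Gray image Φ(C) is a self-orthogonal binary linear code of length α + 2β: Φ(C) ⊆ Φ(C)^⊥. -/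
open TrivSqZeroExt

/-- The Gray image of a self-orthogonal `Z₂Z₂[u]`-linear code is a
self-orthogonal binary code of length `α + 2β`. -/
theorem gray_image_self_orthogonal (α β : ℕ) (C : Set (Amb α β)) (hC : IsLinearCode C)
    (hso : C ⊆ dualCode C) : gray '' C ⊆ binDual (gray '' C) := by
  rintro _ ⟨w, hw, rfl⟩ _ ⟨v, hv, rfl⟩
  have h0 : innerP v w = 0 := hso hw v hv
  have h1 := congrArg TrivSqZeroExt.fst h0
  have h2 := congrArg TrivSqZeroExt.snd h0
  simp only [innerP, fst_add, snd_add, fst_mul, snd_mul, fst_inl, snd_inl,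
    DualNumber.fst_eps, DualNumber.snd_eps, fst_sum, snd_sum, fst_zero, snd_zero,
    smul_eq_mul, MulOpposite.smul_eq_mul_unop, MulOpposite.unop_op,
    zero_mul, mul_zero, mul_one, one_mul, zero_add, add_zero] at h1 h2
  -- h1 : ∑ fst(vⱼ)·fst(wⱼ) = 0 ; h2 : ∑ aᵢdᵢ + ∑ (cross terms) = 0
  simp only [binDot, gray, Finset.sum_add_distrib] at *
  have hqs : ∀ (x y : ZMod 2), (x + y) * (x + y) = x * x + y * y := by decide
  have key : ∀ j : Fin β,
      ((v.2 j).snd * (w.2 j).snd + ((v.2 j).fst + (v.2 j).snd) * ((w.2 j).fst + (w.2 j).snd))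
      = (v.2 j).fst * (w.2 j).fst + ((v.2 j).fst * (w.2 j).snd + (v.2 j).snd * (w.2 j).fst) := by
    intro j
    generalize (v.2 j).fst = a; generalize (v.2 j).snd = b
    generalize (w.2 j).fst = c; generalize (w.2 j).snd = d
    ring_nf
    have : (2 : ZMod 2) = 0 := by decide
    rw [this] <;> ring
  calc ∑ i, v.1 i * w.1 i + ∑ j, (v.2 j).snd * (w.2 j).snd
        + ∑ j, ((v.2 j).fst + (v.2 j).snd) * ((w.2 j).fst + (w.2 j).snd)
      = ∑ i, v.1 i * w.1 i
        + ∑ j, ((v.2 j).snd * (w.2 j).snd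
          + ((v.2 j).fst + (v.2 j).snd) * ((w.2 j).fst + (w.2 j).snd)) := by
        rw [Finset.sum_add_distrib]; ring
    _ = ∑ i, v.1 i * w.1 i
        + ∑ j, ((v.2 j).fst * (w.2 j).fst
          + ((v.2 j).fst * (w.2 j).snd + (v.2 j).snd * (w.2 j).fst)) := by
        simp only [key]
    _ = (∑ j, (v.2 j).fst * (w.2 j).fst)
        + (∑ i, v.1 i * w.1 i
          + ∑ j, ((v.2 j).fst * (w.2 j).snd + (v.2 j).snd * (w.2 j).fst)) := by
        rw [Finset.sum_add_distrib]; ring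
    _ = 0 := by rw [h1, Finset.sum_add_distrib, h2]; ring
end

section
/- Let β be an odd positive integer and θ*(x), σ*(x) polynomials over Z2 with σ* | θ* | x^β − 1. In R[x]/(x^β − 1) with R = Z2[u]/(u^2), the cyclic code generated by θ*(x) + u x^k σ*(x) equals the cyclic code generated by θ*(x) + u σ*(x), for any k ≥ 0. -/
open Polynomial

instance (I : Ideal (Polynomial R2)) : I.IsTwoSided := ⟨fun b ha => mul_comm b _ ▸ I.smul_mem _ ha⟩

/-- Lift a binary polynomial to a polynomial over `R`. -/
noncomputable def liftR (p : Polynomial (ZMod 2)) : Polynomial R2 :=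
  p.map (algebraMap (ZMod 2) R2)

lemma liftR_mul (p q : Polynomial (ZMod 2)) : liftR (p * q) = liftR p * liftR q :=
  Polynomial.map_mul _
lemma liftR_add (p q : Polynomial (ZMod 2)) : liftR (p + q) = liftR p + liftR q :=
  Polynomial.map_add _
lemma liftR_one : liftR 1 = 1 := Polynomial.map_one _
lemma liftR_Xpow_sub_one (β : ℕ) : liftR (X ^ β - 1) = (X : Polynomial R2) ^ β - 1 := by
  simp [liftR, Polynomial.map_sub, Polynomial.map_pow]

/-- Abstract key lemma: in a commutative ring, if `u² = 0`, `t·h = 0`,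
`p·t + q·h = 1` and `x^j` is invertible, then the ideal generated by
`t + u·x^j·s` equals the ideal generated by `t` and `u·s`. -/
lemma span_gen_eq {A : Type*} [CommRing A] (t s u x h p q : A)
    (hu2 : u * u = 0) (hth : t * h = 0) (hbez : p * t + q * h = 1)
    (y : A) (hy : y * x = 1) :
    Ideal.span {t + u * x * s} = Ideal.span {t, u * s} := by
  apply le_antisymm
  · rw [Ideal.span_le, Set.singleton_subset_iff]
    have ht : t ∈ Ideal.span {t, u * s} := Ideal.subset_span (by simp)
    have hs : u * s ∈ Ideal.span {t, u * s} := Ideal.subset_span (by simp)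
    refine add_mem ht ?_
    have := Ideal.mul_mem_left _ (x) hs
    have e : x * (u * s) = u * x * s := by ring
    rwa [e] at this
  · rw [Ideal.span_le]
    set g : A := t + u * x * s with hg
    have hug : u * g = u * t := by
      rw [hg, mul_add, show u * (u * x * s) = (u * u) * (x * s) by ring, hu2,
        zero_mul, add_zero]
    have hhg : h * g = u * x * (h * s) := by
      rw [hg, mul_add, mul_comm h t, hth, zero_add]; ring
    have hus : u * s ∈ Ideal.span {g} := by
      have expand : u * s = (p * s) * (u * g) + (q * y) * (h * g) := by
        rw [hug, hhg]
        have e1 : (q * y) * (u * x * (h * s)) = q * h * (u * s) * (y * x) := by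
          ring
        rw [e1, hy, mul_one]
        calc u * s = (p * t + q * h) * (u * s) := by rw [hbez, one_mul]
          _ = p * s * (u * t) + q * h * (u * s) := by ring
      rw [expand]
      exact add_mem
        (Ideal.mul_mem_left _ _ (Ideal.mul_mem_left _ _ (Ideal.subset_span rfl)))
        (Ideal.mul_mem_left _ _ (Ideal.mul_mem_left _ _ (Ideal.subset_span rfl)))
    have htg : t ∈ Ideal.span {g} := by
      have e : t = g - x * (u * s) := by rw [hg]; ring
      rw [e]
      exact sub_mem (Ideal.subset_span rfl) (Ideal.mul_mem_left _ _ hus)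
    intro z hz
    rcases hz with hz | hz
    · exact hz ▸ htg
    · simp only [Set.mem_singleton_iff] at hz
      exact hz ▸ hus

lemma span_gen_eq' {A : Type*} [CommRing A] (t s u h p q : A)
    (hu2 : u * u = 0) (hth : t * h = 0) (hbez : p * t + q * h = 1) :
    Ideal.span {t + u * s} = Ideal.span {t, u * s} := by
  have := span_gen_eq t s u 1 h p q hu2 hth hbez 1 (mul_one 1)
  simpa using this

set_option synthInstance.maxHeartbeats 1000000 in
set_option maxHeartbeats 2000000 in
/-- For odd `β` and `σ* ∣ θ* ∣ x^β − 1` over `Z₂`, the cyclic code (ideal of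
`R[x]/(x^β−1)`) generated by `θ*(x) + u·x^k·σ*(x)` equals the one generated by
`θ*(x) + u·σ*(x)`. -/
theorem cyclic_code_gen_indep_of_power (β k : ℕ) (hβpos : 0 < β) (hβ : Odd β)
    (θ σ : Polynomial (ZMod 2)) (hσθ : σ ∣ θ) (hθ : θ ∣ X ^ β - 1) :
    Ideal.span {Ideal.Quotient.mk (Ideal.span {(X : Polynomial R2) ^ β - 1})
        (liftR θ + C DualNumber.eps * X ^ k * liftR σ)} =
    Ideal.span {Ideal.Quotient.mk (Ideal.span {(X : Polynomial R2) ^ β - 1})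
        (liftR θ + C DualNumber.eps * liftR σ)} := by
  obtain ⟨h, hh⟩ := hθ
  have hβ2 : (β : ZMod 2) ≠ 0 := by
    have h1 : ((β : ZMod 2)) = ((β % 2 : ℕ) : ZMod 2) := (ZMod.natCast_mod β 2).symm
    rw [h1, Nat.odd_iff.mp hβ]
    decide
  have hsq : Squarefree ((X : Polynomial (ZMod 2)) ^ β - 1) :=
    (Polynomial.X_pow_sub_one_separable_iff.mpr hβ2).squarefree
  have hcop : IsCoprime θ h := by
    rw [hh] at hsq
    exact ((squarefree_mul_iff.mp hsq).1).isCoprime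
  obtain ⟨p, q, hpq⟩ := hcop
  have hu2 : Ideal.Quotient.mk (Ideal.span {(X : Polynomial R2) ^ β - 1})
      (C DualNumber.eps) * Ideal.Quotient.mk (Ideal.span {(X : Polynomial R2) ^ β - 1})
      (C DualNumber.eps) = 0 := by
    rw [← map_mul, ← C_mul, DualNumber.eps_mul_eps, C_0, map_zero]
  have hth : Ideal.Quotient.mk (Ideal.span {(X : Polynomial R2) ^ β - 1}) (liftR θ)
      * Ideal.Quotient.mk (Ideal.span {(X : Polynomial R2) ^ β - 1}) (liftR h) = 0 := by
    rw [← map_mul, ← liftR_mul, ← hh, liftR_Xpow_sub_one]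
    exact Ideal.Quotient.eq_zero_iff_mem.mpr (Ideal.subset_span rfl)
  have hbez : Ideal.Quotient.mk (Ideal.span {(X : Polynomial R2) ^ β - 1}) (liftR p)
      * Ideal.Quotient.mk (Ideal.span {(X : Polynomial R2) ^ β - 1}) (liftR θ)
      + Ideal.Quotient.mk (Ideal.span {(X : Polynomial R2) ^ β - 1}) (liftR q)
      * Ideal.Quotient.mk (Ideal.span {(X : Polynomial R2) ^ β - 1}) (liftR h) = 1 := by
    rw [← map_mul, ← map_mul, ← liftR_mul, ← liftR_mul, ← map_add, ← liftR_add, hpq,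
      liftR_one, map_one]
  have hxβ : (Ideal.Quotient.mk (Ideal.span {(X : Polynomial R2) ^ β - 1}) X) ^ β = 1 := by
    have h0 : Ideal.Quotient.mk (Ideal.span {(X : Polynomial R2) ^ β - 1})
        ((X : Polynomial R2) ^ β - 1) = 0 :=
      Ideal.Quotient.eq_zero_iff_mem.mpr (Ideal.subset_span rfl)
    rw [map_sub, map_pow, map_one, sub_eq_zero] at h0
    exact h0
  have hy : (Ideal.Quotient.mk (Ideal.span {(X : Polynomial R2) ^ β - 1}) X)
      ^ ((β - 1) * k) * (Ideal.Quotient.mk (Ideal.span {(X : Polynomial R2) ^ β - 1}) X)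
      ^ k = 1 := by
    rw [← pow_add]
    have e : (β - 1) * k + k = β * k := by
      cases β with
      | zero => omega
      | succ n => simp [Nat.succ_sub_one, Nat.succ_mul]
    rw [e, pow_mul, hxβ, one_pow]
  have e1 : Ideal.Quotient.mk (Ideal.span {(X : Polynomial R2) ^ β - 1})
      (liftR θ + C DualNumber.eps * X ^ k * liftR σ)
      = Ideal.Quotient.mk (Ideal.span {(X : Polynomial R2) ^ β - 1}) (liftR θ)
      + Ideal.Quotient.mk (Ideal.span {(X : Polynomial R2) ^ β - 1}) (C DualNumber.eps)
      * (Ideal.Quotient.mk (Ideal.span {(X : Polynomial R2) ^ β - 1}) X) ^ k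
      * Ideal.Quotient.mk (Ideal.span {(X : Polynomial R2) ^ β - 1}) (liftR σ) := by
    rw [map_add, map_mul, map_mul, map_pow]
  have e2 : Ideal.Quotient.mk (Ideal.span {(X : Polynomial R2) ^ β - 1})
      (liftR θ + C DualNumber.eps * liftR σ)
      = Ideal.Quotient.mk (Ideal.span {(X : Polynomial R2) ^ β - 1}) (liftR θ)
      + Ideal.Quotient.mk (Ideal.span {(X : Polynomial R2) ^ β - 1}) (C DualNumber.eps)
      * Ideal.Quotient.mk (Ideal.span {(X : Polynomial R2) ^ β - 1}) (liftR σ) := by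
    rw [map_add, map_mul]
  rw [e1, e2]
  exact (@span_gen_eq _ (@Ideal.Quotient.commRing (Polynomial R2) Polynomial.commRing _)
      _ _ _ _ _ _ _ hu2 hth hbez _ hy).trans
    (@span_gen_eq' _ (@Ideal.Quotient.commRing (Polynomial R2) Polynomial.commRing _)
      _ _ _ _ _ _ hu2 hth hbez).symm
end

section
/- Let C be a Z2Z2[u]-cyclic code that is self-orthogonal and contains the codeword (f(x), 0) where f(x) ∈ Z2[x]/(x^α−1). Orthogonality of (f,0) to all cyclic shifts of itself implies (x^α − 1) divides f(x)·f̃(x) in Z2[x], where f̃(x) = x^{α−1} f(1/x) mod (x^α − 1). -/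
open TrivSqZeroExt

/-- The simultaneous cyclic shift on `Z₂^α × R^β`. -/
def shiftT {α β : ℕ} [NeZero α] [NeZero β] (v : Amb α β) : Amb α β :=
  (fun i => v.1 (i - 1), fun j => v.2 (j - 1))

/-- A `Z₂Z₂[u]`-cyclic code: a linear code closed under the cyclic shift. -/
def IsCyclicCode {α β : ℕ} [NeZero α] [NeZero β] (C : Set (Amb α β)) : Prop :=
  IsLinearCode C ∧ ∀ v ∈ C, shiftT v ∈ C

/-- The cyclic code generated by a set of vectors. -/
def cyclicSpan {α β : ℕ} [NeZero α] [NeZero β] (G : Set (Amb α β)) : Set (Amb α β) :=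
  ⋂₀ {D | IsCyclicCode D ∧ G ⊆ D}

open Polynomial in
/-- The vector in `Z₂^n` of coefficients of `p mod (xⁿ − 1)`. -/
noncomputable def vecZ (n : ℕ) (p : Polynomial (ZMod 2)) : Fin n → ZMod 2 :=
  fun i => (p % (X ^ n - 1)).coeff i

open Polynomial in
/-- The vector in `R^n` corresponding to `g(x) + u·a(x)` modulo `xⁿ − 1`. -/
noncomputable def vecR (n : ℕ) (g a : Polynomial (ZMod 2)) : Fin n → R2 :=
  fun j => TrivSqZeroExt.inl ((g % (X ^ n - 1)).coeff j)
    + TrivSqZeroExt.inr ((a % (X ^ n - 1)).coeff j)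

open Polynomial Finset
open Fin.NatCast

-- shift iterate formula
lemma shift_iter {α β : ℕ} [NeZero α] [NeZero β] (k : ℕ) (v : Amb α β) :
    shiftT^[k] v = (fun i => v.1 (i - (k : Fin α)), fun j => v.2 (j - (k : Fin β))) := by
  induction k with
  | zero => simp
  | succ n ih =>
    rw [Function.iterate_succ_apply', ih]
    unfold shiftT
    refine Prod.ext ?_ ?_ <;> funext i <;> simp only <;> congr 1 <;>
      rw [sub_sub] <;> push_cast <;> rw [add_comm]

-- shifts stay in the code
lemma shift_iter_mem {α β : ℕ} [NeZero α] [NeZero β] {C : Set (Amb α β)}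
    (hcyc : IsCyclicCode C) {v : Amb α β} (hv : v ∈ C) (k : ℕ) : shiftT^[k] v ∈ C := by
  induction k with
  | zero => simpa
  | succ n ih => rw [Function.iterate_succ_apply']; exact hcyc.2 _ ih


lemma eps_mul_inl_eq_zero_iff (c : ZMod 2) :
    DualNumber.eps * (inl c : R2) = 0 ↔ c = 0 := by
  constructor
  · intro h
    have := congrArg TrivSqZeroExt.snd h
    simpa [TrivSqZeroExt.snd_mul] using this
  · rintro rfl; simp

-- cyclic orthogonality sums
lemma cyclic_sum_zero {α β : ℕ} [NeZero α] [NeZero β] {C : Set (Amb α β)}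
    (hcyc : IsCyclicCode C) (hso : C ⊆ dualCode C) {F : Fin α → ZMod 2}
    (hmem : ((F, 0) : Amb α β) ∈ C) (k : Fin α) :
    ∑ i : Fin α, F i * F (i + k) = 0 := by
  have hV : shiftT^[(-k : Fin α).val] ((F, 0) : Amb α β) ∈ C :=
    shift_iter_mem hcyc hmem _
  have h := hso hmem _ hV
  rw [shift_iter] at h
  simp only [Fin.cast_val_eq_self, sub_neg_eq_add] at h
  unfold innerP at h
  simp only [Prod.fst, Prod.snd, Pi.zero_apply, zero_mul, mul_zero,
    Finset.sum_const_zero, add_zero] at h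
  rw [eps_mul_inl_eq_zero_iff] at h
  rw [← h]
  exact Finset.sum_congr rfl fun i _ => mul_comm _ _

lemma rcoeff {α : ℕ} (f : Polynomial (ZMod 2)) (hdeg : f.natDegree < α) (q : ℕ) :
    (reflect (α - 1) f).coeff q = if q ≤ α - 1 then f.coeff (α - 1 - q) else 0 := by
  rw [coeff_reflect]
  split
  · rw [revAt_le ‹_›]
  · rw [show revAt (α-1) q = q from revAt_eq_self_of_lt (by omega)]
    exact coeff_eq_zero_of_natDegree_lt (by omega)

lemma coeffA {α : ℕ} (f : Polynomial (ZMod 2)) (hdeg : f.natDegree < α) {j : ℕ} (hj : j < α) :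
    (f * reflect (α - 1) f).coeff j
      = ∑ i ∈ range α, f.coeff i * f.coeff (i + (α - 1 - j)) := by
  rw [coeff_mul, Finset.Nat.sum_antidiagonal_eq_sum_range_succ_mk]
  have h1 : ∑ i ∈ range (j+1), f.coeff i * (reflect (α-1) f).coeff (j - i)
      = ∑ i ∈ range (j+1), f.coeff i * f.coeff (i + (α - 1 - j)) := by
    refine Finset.sum_congr rfl fun i hi => ?_
    rw [Finset.mem_range] at hi
    rw [rcoeff f hdeg, if_pos (by omega),
      show α - 1 - (j - i) = i + (α - 1 - j) by omega]
  rw [show j.succ = j + 1 from rfl, h1]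
  refine Finset.sum_subset (Finset.range_subset_range.2 (by omega)) fun i hi hni => ?_
  rw [Finset.mem_range] at hi; rw [Finset.mem_range] at hni
  rw [coeff_eq_zero_of_natDegree_lt (show f.natDegree < i + (α - 1 - j) by omega), mul_zero]

lemma coeffB {α : ℕ} (f : Polynomial (ZMod 2)) (hdeg : f.natDegree < α) {j : ℕ} (hj : j < α) :
    (f * reflect (α - 1) f).coeff (j + α)
      = ∑ i ∈ range α, f.coeff i * (if j + 1 ≤ i then f.coeff (i - (j+1)) else 0) := by
  rw [coeff_mul, Finset.Nat.sum_antidiagonal_eq_sum_range_succ_mk]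
  rw [show (j + α).succ = j + α + 1 from rfl]
  rw [← Finset.sum_subset (Finset.range_subset_range.2 (by omega : α ≤ j + α + 1))
    (fun i hi hni => by
      rw [Finset.mem_range] at hni
      rw [coeff_eq_zero_of_natDegree_lt (show f.natDegree < i by omega), zero_mul])]
  refine Finset.sum_congr rfl fun i hi => ?_
  rw [Finset.mem_range] at hi
  by_cases hc : j + 1 ≤ i
  · rw [if_pos hc, rcoeff f hdeg, if_pos (by omega),
      show α - 1 - (j + α - i) = i - (j + 1) by omega]
  · rw [if_neg hc, rcoeff f hdeg, if_neg (by omega)]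

lemma coeff_high {α : ℕ} (f : Polynomial (ZMod 2)) (hdeg : f.natDegree < α) {t : ℕ}
    (ht : 2 * α ≤ t) : (f * reflect (α - 1) f).coeff t = 0 := by
  rw [coeff_mul]
  refine Finset.sum_eq_zero fun p hp => ?_
  rw [Finset.HasAntidiagonal.mem_antidiagonal] at hp
  by_cases hc : p.1 < α
  · rw [rcoeff f hdeg, if_neg (by omega), mul_zero]
  · rw [coeff_eq_zero_of_natDegree_lt (by omega), zero_mul]

lemma key_s15 {α : ℕ} (f : Polynomial (ZMod 2)) (hdeg : f.natDegree < α)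
    (hsum : ∀ s : ℕ, s < α → ∑ i ∈ range α, f.coeff i * f.coeff ((i + s) % α) = 0)
    {j : ℕ} (hj : j < α) :
    (f * reflect (α - 1) f).coeff j = (f * reflect (α - 1) f).coeff (j + α) := by
  have h0 := hsum (α - 1 - j) (by omega)
  have hsplit : ∑ i ∈ range α, f.coeff i * f.coeff ((i + (α - 1 - j)) % α)
      = (f * reflect (α - 1) f).coeff j + (f * reflect (α - 1) f).coeff (j + α) := by
    rw [coeffA f hdeg hj, coeffB f hdeg hj, ← Finset.sum_add_distrib]
    refine Finset.sum_congr rfl fun i hi => ?_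
    rw [Finset.mem_range] at hi
    rw [← mul_add]
    congr 1
    by_cases hc : i + (α - 1 - j) < α
    · rw [Nat.mod_eq_of_lt hc, if_neg (by omega), add_zero]
    · rw [coeff_eq_zero_of_natDegree_lt (show f.natDegree < i + (α - 1 - j) by omega), zero_add,
        if_pos (show j + 1 ≤ i by omega), Nat.mod_eq_sub_mod (by omega),
        Nat.mod_eq_of_lt (by omega), show i + (α - 1 - j) - α = i - (j + 1) by omega]
  rw [hsplit] at h0
  have h2 : ∀ x y : ZMod 2, x + y = 0 → x = y := by decide
  exact h2 _ _ h0


open Polynomial in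
/-- If a self-orthogonal `Z₂Z₂[u]`-cyclic code contains the codeword `(f(x),0)`,
then `x^α − 1` divides `f(x)·f̃(x)` over `Z₂`, where `f̃ = x^(α−1) f(1/x)`
(realized as `reflect (α−1) f`). -/
theorem self_orthogonal_divides_f_ftilde (α β : ℕ) [NeZero α] [NeZero β]
    (C : Set (Amb α β)) (hcyc : IsCyclicCode C) (hso : C ⊆ dualCode C)
    (f : Polynomial (ZMod 2)) (hdeg : f.natDegree < α)
    (hmem : ((vecZ α f, 0) : Amb α β) ∈ C) :
    (X ^ α - 1 : Polynomial (ZMod 2)) ∣ f * reflect (α - 1) f := by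
  have hα : 0 < α := Nat.pos_of_ne_zero (NeZero.ne α)
  have hmonic : (X ^ α - 1 : Polynomial (ZMod 2)).Monic := by
    simpa using monic_X_pow_sub_C (1 : ZMod 2) hα.ne'
  have hmod : f % (X ^ α - 1 : Polynomial (ZMod 2)) = f := by
    rw [← Polynomial.modByMonic_eq_mod f hmonic]
    refine (Polynomial.modByMonic_eq_self_iff hmonic).2 ?_
    rw [show (X ^ α - 1 : Polynomial (ZMod 2)) = X ^ α - Polynomial.C 1 by
        rw [Polynomial.C_1],
      degree_X_pow_sub_C hα]
    exact lt_of_le_of_lt degree_le_natDegree (by exact_mod_cast hdeg)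
  have hF : ∀ i : Fin α, vecZ α f i = f.coeff i := fun i => by
    rw [vecZ, hmod]
  have hsum : ∀ s : ℕ, s < α →
      ∑ i ∈ Finset.range α, f.coeff i * f.coeff ((i + s) % α) = 0 := by
    intro s hs
    have h := cyclic_sum_zero hcyc hso hmem (⟨s, hs⟩ : Fin α)
    rw [← Fin.sum_univ_eq_sum_range (fun i => f.coeff i * f.coeff ((i + s) % α)) α, ← h]
    refine Finset.sum_congr rfl fun i _ => ?_
    rw [hF, hF, Fin.val_add]
  set g := f * reflect (α - 1) f with hg
  set q0 : Polynomial (ZMod 2) := ∑ j ∈ Finset.range α, Polynomial.C (g.coeff (j + α)) * X ^ j with hq0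
  have hq0coeff : ∀ t : ℕ, q0.coeff t = if t < α then g.coeff (t + α) else 0 := by
    intro t
    rw [hq0, finset_sum_coeff]
    simp only [coeff_C_mul, coeff_X_pow, mul_ite, mul_one, mul_zero]
    rw [Finset.sum_ite_eq]
    simp [Finset.mem_range]
  refine ⟨q0, ?_⟩
  rw [mul_comm]
  ext t
  rw [mul_sub, mul_one, coeff_sub, coeff_mul_X_pow', hq0coeff, hq0coeff]
  rcases lt_or_ge t α with ht | ht
  · rw [if_neg (by omega), if_pos ht, zero_sub, CharTwo.neg_eq]
    exact key_s15 f hdeg hsum ht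
  · rcases lt_or_ge t (2 * α) with ht2 | ht2
    · rw [if_pos ht, if_pos (show t - α < α by omega), Nat.sub_add_cancel ht,
        if_neg (by omega), sub_zero]
    · rw [if_pos ht, if_neg (by omega), if_neg (by omega), sub_zero, coeff_high f hdeg ht2]
end
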